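/- In the addition-free theta-term system T, substitution of a fixed γ < Ω_1 for the last zero is strictly monotone: if α < β and γ < Ω_1, then α[γ] < β[γ]. -/
import Mathlib


/-- Addition-free theta terms. -/
inductive TTerm : Type
  | zero : TTerm
  | theta : ℕ → TTerm → TTerm
  deriving DecidableEq

namespace TTerm

/-- `S 0 = -1`, `S (ϑ_i α) = i`. -/
def S : TTerm → ℤ
  | zero => -1
  | theta i _ => i

/-- Membership in the term system `T`: `ϑ_i α` is formed only when `S α ≤ i + 1`. -/
inductive WF : TTerm → Prop
  | zero : WF zero
  | theta {i : ℕ} {a : TTerm} : WF a → S a ≤ (i : ℤ) + 1 → WF (theta i a)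

/-- Coefficients `k_i`. -/
def k (i : ℕ) : TTerm → TTerm
  | zero => zero
  | theta j b => if j ≤ i then theta j b else k i b

mutual
/-- The linear order on theta terms. -/
inductive Lt : TTerm → TTerm → Prop
  | zero {a : TTerm} : a ≠ zero → Lt zero a
  | idx {i j : ℕ} {a b : TTerm} : i < j → Lt (theta i a) (theta j b)
  | left {i : ℕ} {a b : TTerm} : Lt a b → Lt (k i a) (theta i b) →
      Lt (theta i a) (theta i b)
  | right {i : ℕ} {a b : TTerm} : Lt b a → Le (theta i a) (k i b) →
      Lt (theta i a) (theta i b)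

inductive Le : TTerm → TTerm → Prop
  | refl {a : TTerm} : Le a a
  | of_lt {a b : TTerm} : Lt a b → Le a b
end

end TTerm

/-- Replacing the last zero of `α` by `γ`. -/
def TTerm.subst : TTerm → TTerm → TTerm
  | TTerm.zero, g => g
  | TTerm.theta i b, g => TTerm.theta i (TTerm.subst b g)

namespace TTerm

/-- auxiliary size (chain length) -/
def sz : TTerm → ℕ
  | zero => 0
  | theta _ b => sz b + 1

lemma sz_k (i : ℕ) : ∀ x, sz (k i x) ≤ sz x
  | zero => le_refl _
  | theta j b => by
    by_cases h : j ≤ i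
    · simp [k, h]
    · simp only [k, if_neg h]
      exact (sz_k i b).trans (Nat.le_succ _)

lemma sz_subst (g : TTerm) : ∀ a, sz (subst a g) = sz a + sz g
  | zero => by simp [subst, sz]
  | theta j b => by simp [subst, sz, sz_subst g b]; omega

/-- s is a suffix of the chain t -/
def IsSuffix (s : TTerm) : TTerm → Prop
  | zero => s = zero
  | theta j b => s = theta j b ∨ IsSuffix s b

lemma suffix_refl : ∀ t, IsSuffix t t
  | zero => rfl
  | theta _ _ => Or.inl rfl

lemma suffix_trans : ∀ {a b c : TTerm}, IsSuffix a b → IsSuffix b c → IsSuffix a c := by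
  intro a b c
  induction c with
  | zero => intro h1 h2; rw [show b = zero from h2] at h1; exact h1
  | theta j w ih =>
    intro h1 h2
    rcases h2 with rfl | h2
    · exact h1
    · exact Or.inr (ih h1 h2)

lemma suffix_sz : ∀ {s t : TTerm}, IsSuffix s t → sz s ≤ sz t := by
  intro s t
  induction t with
  | zero => intro h; rw [show s = zero from h]
  | theta j w ih =>
    intro h
    rcases h with rfl | h
    · exact le_refl _
    · exact (ih h).trans (Nat.le_succ _)

lemma suffix_arg {j : ℕ} {c : TTerm} : IsSuffix c (theta j c) := by
  simp only [IsSuffix]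
  exact Or.inr (suffix_refl c)

lemma suffix_theta_arg {j : ℕ} {c t : TTerm} (h : IsSuffix (theta j c) t) : IsSuffix c t :=
  suffix_trans suffix_arg h

lemma suffix_k (i : ℕ) : ∀ t, IsSuffix (k i t) t
  | zero => rfl
  | theta j b => by
    by_cases h : j ≤ i
    · simp only [k, if_pos h]; exact suffix_refl _
    · simp only [k, if_neg h]; exact Or.inr (suffix_k i b)

lemma k_shape : ∀ t, k 0 t = zero ∨ ∃ c, k 0 t = theta 0 c
  | zero => Or.inl rfl
  | theta j b => by
    by_cases h : j ≤ 0
    · have h0 : j = 0 := Nat.le_zero.mp h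
      subst h0
      right; exact ⟨b, by simp [k]⟩
    · simp only [k, if_neg h]; exact k_shape b

lemma not_lt_zero (a : TTerm) : ¬ Lt a zero := by
  intro h
  cases h with
  | zero h => exact h rfl

lemma eq_zero_of_le_zero {a : TTerm} (h : Le a zero) : a = zero := by
  cases h with
  | refl => rfl
  | of_lt h => exact absurd h (not_lt_zero a)

/-- trichotomy -/
theorem lt_tri : (a b : TTerm) → Lt a b ∨ a = b ∨ Lt b a
  | zero, zero => Or.inr (Or.inl rfl)
  | zero, theta _ _ => Or.inl (Lt.zero nofun)
  | theta _ _, zero => Or.inr (Or.inr (Lt.zero nofun))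
  | theta i x, theta j y => by
    rcases Nat.lt_trichotomy i j with h | rfl | h
    · exact Or.inl (Lt.idx h)
    · rcases lt_tri x y with hxy | rfl | hyx
      · rcases lt_tri (k i x) (theta i y) with h2 | h2 | h2
        · exact Or.inl (Lt.left hxy h2)
        · refine Or.inr (Or.inr (Lt.right hxy ?_)); rw [h2]; exact Le.refl
        · exact Or.inr (Or.inr (Lt.right hxy (Le.of_lt h2)))
      · exact Or.inr (Or.inl rfl)
      · rcases lt_tri (k i y) (theta i x) with h2 | h2 | h2
        · exact Or.inr (Or.inr (Lt.left hyx h2))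
        · refine Or.inl (Lt.right hyx ?_); rw [h2]; exact Le.refl
        · exact Or.inl (Lt.right hyx (Le.of_lt h2))
    · exact Or.inr (Or.inr (Lt.idx h))
termination_by a b => sz a + sz b
decreasing_by
  · simp [sz]; omega
  · have := sz_k i x; simp [sz]; omega
  · have := sz_k i y; simp [sz]; omega

/-- locate a θ₀-suffix relative to k 0 -/
lemma loc : ∀ b c, IsSuffix (theta 0 c) b →
    theta 0 c = k 0 b ∨ ∃ u, k 0 b = theta 0 u ∧ IsSuffix (theta 0 c) u := by
  intro b
  induction b with
  | zero => intro c h; exact absurd h nofun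
  | theta m w ih =>
    intro c h
    rcases h with h | h
    · left; rw [← h]; simp [k]
    · by_cases hm : m ≤ 0
      · have h0 : m = 0 := Nat.le_zero.mp hm
        subst h0
        right; exact ⟨w, by simp [k], h⟩
      · rw [show k 0 (theta m w) = k 0 w by simp [k, hm]]
        exact ih c h

/-- any θ₀-shaped suffix of b is < θ₀ b -/
theorem lemN' : ∀ b c, IsSuffix (theta 0 c) b → Lt (theta 0 c) (theta 0 b)
  | b, c, hsuf => by
    have hcb : IsSuffix c b := suffix_theta_arg hsuf
    rcases lt_tri c b with h | heq | h
    · refine Lt.left h ?_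
      rcases k_shape c with hk | ⟨c', hk⟩
      · rw [hk]; exact Lt.zero nofun
      · rw [hk]
        exact lemN' b c' (hk ▸ suffix_trans (suffix_k 0 c) hcb)
    · exfalso; subst heq; have := suffix_sz hsuf; simp [sz] at this
    · refine Lt.right h ?_
      rcases loc b c hsuf with hk | ⟨u, hk, hu⟩
      · rw [← hk]; exact Le.refl
      · rw [hk]
        exact Le.of_lt (lemN' u c hu)
termination_by b c => sz c + sz b
decreasing_by
  · have h2 := sz_k 0 c; rw [hk] at h2; simp [sz] at h2; omega
  · have h1 := suffix_sz (suffix_k 0 b); rw [hk] at h1; simp [sz] at h1; omega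

theorem lemN (b s : TTerm) (hsuf : IsSuffix s b) (hsh : s = zero ∨ ∃ c, s = theta 0 c) :
    Lt s (theta 0 b) := by
  rcases hsh with rfl | ⟨c, rfl⟩
  · exact Lt.zero nofun
  · exact lemN' b c hsuf

lemma lemK (g : TTerm) (hg : k 0 g = g) :
    ∀ e, k 0 (subst e g) = g ∨ ∃ w, sz w < sz e ∧ k 0 (subst e g) = theta 0 (subst w g) := by
  intro e
  induction e with
  | zero => left; simpa [subst] using hg
  | theta m w ih =>
    by_cases hm : m ≤ 0
    · right
      refine ⟨w, by simp [sz], ?_⟩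
      have : m = 0 := by omega
      subst this
      simp [subst, k]
    · rw [show subst (theta m w) g = theta m (subst w g) from rfl,
        show k 0 (theta m (subst w g)) = k 0 (subst w g) by simp [k, hm]]
      rcases ih with h | ⟨w', h1, h2⟩
      · exact Or.inl h
      · exact Or.inr ⟨w', by simp [sz]; omega, h2⟩

/-- the core lemma: θ₀ c < θ₀ (e[γ]) whenever c is a suffix of d and θ₀ c ≤ γ = θ₀ d -/
theorem core (d : TTerm) :
    ∀ e c, IsSuffix c d → Le (theta 0 c) (theta 0 d) →
      Lt (theta 0 c) (theta 0 (subst e (theta 0 d)))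
  | e, c, hc, hle => by
    set g := theta 0 d with hg
    rcases lt_tri c (subst e g) with h | h | h
    · refine Lt.left h ?_
      rcases k_shape c with hk | ⟨c', hk⟩
      · rw [hk]; exact Lt.zero nofun
      · have hsuf : IsSuffix (k 0 c) d := suffix_trans (suffix_k 0 c) hc
        rw [hk]
        refine core d e c' ?_ ?_
        · exact suffix_theta_arg (hk ▸ hsuf)
        · exact Le.of_lt (hk ▸ lemN d (k 0 c) hsuf (Or.inr ⟨c', hk⟩))
    · exfalso
      have h1 := suffix_sz hc
      have h2 := sz_subst g e
      rw [← h] at h2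
      simp [sz, hg] at h2
      omega
    · refine Lt.right h ?_
      have hk0 : k 0 g = g := by simp [hg, k]
      rcases lemK g hk0 e with hk | ⟨w, hw, hk⟩
      · rw [hk]; exact hle
      · rw [hk]
        exact Le.of_lt (core d w c hc hle)
termination_by e c => sz e + sz c
decreasing_by
  · have h1 := sz_k 0 c; rw [hk] at h1; simp [sz] at h1 ⊢; omega
  · simp [sz]; omega

lemma gamma_lt (g : TTerm) (hsh : g = zero ∨ ∃ d, g = theta 0 d) :
    ∀ b, b ≠ zero → Lt g (subst b g) := by
  intro b hb
  cases b with
  | zero => exact absurd rfl hb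
  | theta j c =>
    show Lt g (theta j (subst c g))
    rcases hsh with rfl | ⟨d, rfl⟩
    · exact Lt.zero nofun
    · rcases Nat.eq_zero_or_pos j with rfl | hj
      · exact core d c d (suffix_refl d) Le.refl
      · exact Lt.idx hj

lemma k_subst (g : TTerm) (hsh : g = zero ∨ ∃ d, g = theta 0 d) (i : ℕ) :
    ∀ a, k i (subst a g) = subst (k i a) g := by
  have hkg : k i g = g := by rcases hsh with rfl | ⟨d, rfl⟩ <;> simp [k]
  intro a
  induction a with
  | zero => simpa [subst, k] using hkg
  | theta j b ih => by_cases hj : j ≤ i <;> simp [subst, k, hj, ih]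

theorem lt_subst (g : TTerm) (hsh : g = zero ∨ ∃ d, g = theta 0 d)
    {a b : TTerm} (h : Lt a b) : Lt (subst a g) (subst b g) := by
  induction h using TTerm.Lt.rec
    (motive_2 := fun a b _ => Le (subst a g) (subst b g)) with
  | zero hb => exact gamma_lt g hsh _ hb
  | idx h => exact .idx h
  | left h1 h2 ih1 ih2 => exact .left ih1 (by rw [k_subst g hsh]; exact ih2)
  | right h1 h2 ih1 ih2 => exact .right ih1 (by rw [k_subst g hsh]; exact ih2)
  | refl => exact .refl
  | of_lt h ih => exact .of_lt ih

lemma shape_of_lt (g : TTerm) (h : Lt g (theta 1 zero)) :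
    g = zero ∨ ∃ d, g = theta 0 d := by
  cases h with
  | zero h => exact Or.inl rfl
  | idx h =>
    right
    rename_i i a
    have : i = 0 := by omega
    subst this
    exact ⟨a, rfl⟩
  | left h1 h2 => exact absurd h1 (not_lt_zero _)
  | right h1 h2 =>
    exfalso
    have := eq_zero_of_le_zero (by simpa [k] using h2)
    exact absurd this nofun

end TTerm

/-- Substitution of a fixed `γ < Ω₁` for the last zero is strictly monotone. -/
theorem stmt5 (α β γ : TTerm) (hα : TTerm.WF α) (hβ : TTerm.WF β) (hγ : TTerm.WF γ)
    (hγ1 : TTerm.Lt γ (TTerm.theta 1 TTerm.zero)) (h : TTerm.Lt α β) :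
    TTerm.Lt (TTerm.subst α γ) (TTerm.subst β γ) :=
  TTerm.lt_subst γ (TTerm.shape_of_lt γ hγ1) h
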